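/- Let r ≥ 1 and let G₁ be a group. Let G be the free product of the constant family of groups Gᵢ = G₁ indexed by ℤ/rℤ, with canonical inclusions ιᵢ : G₁ → G, and let f be an automorphism of G such that f(ιᵢ(G₁)) = ι_{i+1}(G₁) for all i ∈ ℤ/rℤ, so that f^r maps ι₀(G₁) onto itself and induces an automorphism φ of G₁ with f^r(ι₀(g)) = ι₀(φ(g)) for all g ∈ G₁. Then f is meridianal if and only if φ is a meridianal automorphism of G₁. -/

import Mathlib

private lemma tele_mem {G : Type*} [Group G] (f : MulAut G) :
    ∀ (n : ℕ) (g : G), g⁻¹ * (f ^ n) g ∈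
      Subgroup.normalClosure {x : G | ∃ g, x = g⁻¹ * f g} := by
  intro n
  induction n with
  | zero => intro g; simpa using one_mem _
  | succ n ih =>
    intro g
    have h : g⁻¹ * (f ^ (n + 1)) g = (g⁻¹ * f g) * ((f g)⁻¹ * (f ^ n) (f g)) := by
      rw [pow_succ, MulAut.mul_apply]
      group
    rw [h]
    exact mul_mem (Subgroup.subset_normalClosure ⟨g, rfl⟩) (ih (f g))

section Aux

variable {r : ℕ} {G₁ : Type*} [Group G₁]
  (f : MulAut (Monoid.CoprodI (fun _ : ZMod r => G₁)))
  (hf : ∀ i : ZMod r,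
      Subgroup.map f.toMonoidHom
        (MonoidHom.range (Monoid.CoprodI.of (M := fun _ : ZMod r => G₁) (i := i))) =
      MonoidHom.range (Monoid.CoprodI.of (M := fun _ : ZMod r => G₁) (i := i + 1)))

include hf

private lemma fwd_ex : ∀ (n : ℕ) (g : G₁), ∃ h : G₁,
    (f ^ n) (Monoid.CoprodI.of (M := fun _ : ZMod r => G₁) (i := (0 : ZMod r)) g) =
      Monoid.CoprodI.of (M := fun _ : ZMod r => G₁) (i := ((n : ℕ) : ZMod r)) h := by
  intro n
  induction n with
  | zero => intro g; exact ⟨g, by simp⟩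
  | succ n ih =>
    intro g
    obtain ⟨h, hh⟩ := ih g
    have hmem : f (Monoid.CoprodI.of (M := fun _ : ZMod r => G₁) (i := ((n : ℕ) : ZMod r)) h) ∈
        MonoidHom.range
          (Monoid.CoprodI.of (M := fun _ : ZMod r => G₁) (i := ((n : ℕ) : ZMod r) + 1)) := by
      rw [← hf ((n : ℕ) : ZMod r)]
      exact Subgroup.mem_map.2 ⟨_, MonoidHom.mem_range.2 ⟨h, rfl⟩, rfl⟩
    obtain ⟨h', hh'⟩ := hmem
    refine ⟨h', ?_⟩
    rw [pow_succ', MulAut.mul_apply, hh, Nat.cast_add, Nat.cast_one]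
    exact hh'.symm

private lemma fwd_surj : ∀ (n : ℕ) (h : G₁), ∃ g : G₁,
    (f ^ n) (Monoid.CoprodI.of (M := fun _ : ZMod r => G₁) (i := (0 : ZMod r)) g) =
      Monoid.CoprodI.of (M := fun _ : ZMod r => G₁) (i := ((n : ℕ) : ZMod r)) h := by
  intro n
  induction n with
  | zero => intro h; exact ⟨h, by simp⟩
  | succ n ih =>
    intro h
    have hmem : Monoid.CoprodI.of (M := fun _ : ZMod r => G₁)
        (i := ((n : ℕ) : ZMod r) + 1) h ∈
        Subgroup.map f.toMonoidHom
          (MonoidHom.range (Monoid.CoprodI.of (M := fun _ : ZMod r => G₁)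
            (i := ((n : ℕ) : ZMod r)))) := by
      rw [hf ((n : ℕ) : ZMod r)]
      exact MonoidHom.mem_range.2 ⟨h, rfl⟩
    obtain ⟨x, hx, hfx⟩ := Subgroup.mem_map.1 hmem
    obtain ⟨h', rfl⟩ := MonoidHom.mem_range.1 hx
    obtain ⟨g, hg⟩ := ih h'
    refine ⟨g, ?_⟩
    rw [pow_succ', MulAut.mul_apply, hg, Nat.cast_add, Nat.cast_one]
    exact hfx

end Aux

/-- With the same setup as Statement 0, `f` is meridianal (the normal closure of
`{g⁻¹ * f g}` is all of `G`) if and only if `φ` is a meridianal automorphism of `G₁`. -/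
theorem stmt_1 (r : ℕ) (hr : 1 ≤ r) (G₁ : Type*) [Group G₁]
    (f : MulAut (Monoid.CoprodI (fun _ : ZMod r => G₁)))
    (hf : ∀ i : ZMod r,
      Subgroup.map f.toMonoidHom
        (MonoidHom.range (Monoid.CoprodI.of (M := fun _ : ZMod r => G₁) (i := i))) =
      MonoidHom.range (Monoid.CoprodI.of (M := fun _ : ZMod r => G₁) (i := i + 1)))
    (φ : MulAut G₁)
    (hφ : ∀ g : G₁,
      (f ^ r) (Monoid.CoprodI.of (M := fun _ : ZMod r => G₁) (i := (0 : ZMod r)) g) =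
        Monoid.CoprodI.of (M := fun _ : ZMod r => G₁) (i := (0 : ZMod r)) (φ g)) :
    Subgroup.normalClosure {x : Monoid.CoprodI (fun _ : ZMod r => G₁) | ∃ g, x = g⁻¹ * f g} = ⊤
      ↔ Subgroup.normalClosure {x : G₁ | ∃ g, x = g⁻¹ * φ g} = ⊤ := by
  haveI : NeZero r := ⟨by omega⟩
  set ι : ∀ i : ZMod r, G₁ →* Monoid.CoprodI (fun _ : ZMod r => G₁) :=
    fun i => Monoid.CoprodI.of (M := fun _ : ZMod r => G₁) (i := i) with hι
  set N := Subgroup.normalClosure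
    {x : Monoid.CoprodI (fun _ : ZMod r => G₁) | ∃ g, x = g⁻¹ * f g} with hN
  set M := Subgroup.normalClosure {x : G₁ | ∃ g, x = g⁻¹ * φ g} with hM
  constructor
  · -- f meridianal → φ meridianal
    intro hNtop
    -- the maps d n : f^n (ι 0 g) = ι n (d n g)
    have hex := fwd_ex f hf
    choose dfun hd using hex
    have dinj : ∀ n : ℕ, Function.Injective (dfun n) := by
      intro n a b hab
      have : (f ^ n) (ι 0 a) = (f ^ n) (ι 0 b) := by
        rw [hd, hd, hab]
      exact Monoid.CoprodI.of_injective (M := fun _ : ZMod r => G₁) (0 : ZMod r) ((f ^ n).injective this)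
    have hdmul : ∀ (n : ℕ) (a b : G₁), dfun n (a * b) = dfun n a * dfun n b := by
      intro n a b
      apply Monoid.CoprodI.of_injective (M := fun _ : ZMod r => G₁) ((n : ℕ) : ZMod r)
      show ι _ _ = ι _ _
      rw [map_mul, ← hd, ← hd, ← hd, ← map_mul, map_mul]
    have hsurj : ∀ (n : ℕ) (h : G₁), ∃ g, dfun n g = h := by
      intro n h
      obtain ⟨g, hg⟩ := fwd_surj f hf n h
      refine ⟨g, Monoid.CoprodI.of_injective (M := fun _ : ZMod r => G₁) ((n : ℕ) : ZMod r) ?_⟩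
      show ι _ _ = ι _ _
      rw [← hd, hg]
    choose efun he using hsurj
    have heinv : ∀ (n : ℕ) (x : G₁), efun n (dfun n x) = x := fun n x =>
      dinj n (by rw [he])
    have hd0 : ∀ x : G₁, dfun 0 x = x := by
      intro x
      apply Monoid.CoprodI.of_injective (M := fun _ : ZMod r => G₁) ((0 : ℕ) : ZMod r)
      show ι _ _ = ι _ _
      rw [← hd]
      simp [hι]
    have he0 : ∀ x : G₁, efun 0 x = x := by
      intro x
      calc efun 0 x = dfun 0 (efun 0 x) := (hd0 _).symm
        _ = x := he 0 x
    -- the homomorphism ψ : G →* G₁ ⧸ M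
    set Q : G₁ →* G₁ ⧸ M := QuotientGroup.mk' M with hQ
    set ψi : ∀ _ : ZMod r, G₁ →* G₁ ⧸ M := fun i =>
      MonoidHom.mk' (fun h => Q (efun i.val h)) (by
        intro a b
        show Q (efun i.val (a * b)) = Q (efun i.val a) * Q (efun i.val b)
        have : efun i.val (a * b) = efun i.val a * efun i.val b := by
          apply dinj i.val
          rw [he, hdmul, he, he]
        rw [this, map_mul]) with hψi
    set ψ := Monoid.CoprodI.lift ψi with hψ
    have hψ_of : ∀ (i : ZMod r) (h : G₁), ψ (ι i h) = Q (efun i.val h) := by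
      intro i h
      rw [hψ, hι]
      exact Monoid.CoprodI.lift_of ψi h
    -- ψ is f-invariant
    have hψf_of : ∀ (i : ZMod r) (h : G₁), ψ (f (ι i h)) = ψ (ι i h) := by
      intro i h
      set n := i.val with hn
      have hcast : ((n : ℕ) : ZMod r) = i := ZMod.natCast_rightInverse i
      set g := efun n h with hg
      have hkey : ι i h = (f ^ n) (ι 0 g) := by
        rw [hd, hcast, hg, he]
      have hnr : n < r := ZMod.val_lt i
      rw [hψ_of i h, ← hg, hkey, ← MulAut.mul_apply, ← pow_succ']
      rcases lt_or_eq_of_le (show n + 1 ≤ r by omega) with hlt | heq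
      · -- n + 1 < r
        rw [hd (n + 1) g, hψ_of]
        have hval : (((n + 1 : ℕ) : ZMod r)).val = n + 1 := by
          rw [ZMod.val_natCast, Nat.mod_eq_of_lt hlt]
        rw [hval, heinv]
      · -- n + 1 = r
        rw [heq, hφ g, hψ_of]
        rw [ZMod.val_zero, he0]
        have : g⁻¹ * φ g ∈ M := Subgroup.subset_normalClosure ⟨g, rfl⟩
        exact ((QuotientGroup.eq ).2 this).symm
    have hψf : ∀ x, ψ (f x) = ψ x := by
      intro x
      induction x using Monoid.CoprodI.induction_on with
      | one => simp
      | of i h => exact hψf_of i h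
      | mul x y hx hy => rw [map_mul, map_mul, map_mul, hx, hy]
    -- N ≤ ker ψ
    have hker : N ≤ ψ.ker := by
      apply Subgroup.normalClosure_le_normal
      rintro x ⟨g, rfl⟩
      show g⁻¹ * f g ∈ ψ.ker
      rw [MonoidHom.mem_ker, map_mul, map_inv, hψf, inv_mul_cancel]
    rw [hNtop] at hker
    -- conclude M = ⊤
    rw [Subgroup.eq_top_iff']
    intro h
    have h1 : ψ (ι 0 h) = 1 := hker (Subgroup.mem_top _)
    rw [hψ_of, ZMod.val_zero, he0] at h1
    rw [hQ] at h1
    exact (QuotientGroup.eq_one_iff h).1 h1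
  · -- φ meridianal → f meridianal
    intro hMtop
    have h0mem : ∀ g : G₁, ι 0 g ∈ N := by
      have hsub : {x : G₁ | ∃ g, x = g⁻¹ * φ g} ⊆ ↑(N.comap (ι 0)) := by
        rintro x ⟨g, rfl⟩
        show ι 0 (g⁻¹ * φ g) ∈ N
        rw [map_mul, map_inv, ← hφ g]
        exact tele_mem f r (ι 0 g)
      have hle := Subgroup.normalClosure_le_normal hsub
      rw [← hM, hMtop] at hle
      intro g
      exact hle (Subgroup.mem_top g)
    rw [Subgroup.eq_top_iff']
    intro x
    induction x using Monoid.CoprodI.induction_on with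
    | one => exact one_mem _
    | mul x y hx hy => exact mul_mem hx hy
    | of i h =>
      obtain ⟨g, hg⟩ := fwd_surj f hf i.val h
      have hcast : ((i.val : ℕ) : ZMod r) = i := ZMod.natCast_rightInverse i
      rw [hcast] at hg
      have hx : Monoid.CoprodI.of (M := fun _ : ZMod r => G₁) (i := i) h =
          ι 0 g * ((ι 0 g)⁻¹ * (f ^ i.val) (ι 0 g)) := by
        rw [hg]
        group
      rw [hx]
      exact mul_mem (h0mem g) (tele_mem f i.val (ι 0 g))
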